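/- Every bounded linearly convex domain Ω ⊆ ℂ^n is Kobayashi complete (k-finitely compact): for any z ∈ Ω and any sequence (z^k) ⊆ Ω without accumulation point in Ω, k_Ω(z, z^k) → ∞. -/

import Mathlib

open scoped ENNReal

/-- The Poincaré distance on the unit disc `𝔻 ⊆ ℂ`. -/
noncomputable def poincareDist (a b : ℂ) : ℝ :=
  let ρ := ‖(a - b) / (1 - (starRingEnd ℂ) a * b)‖
  (1 / 2) * Real.log ((1 + ρ) / (1 - ρ))

/-- The Lempert function of `Ω ⊆ E`, defined via analytic discs in `Ω`. -/
noncomputable def lempert (E : Type*) [NormedAddCommGroup E] [NormedSpace ℂ E]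
    (Ω : Set E) (w z : E) : ℝ≥0∞ :=
  ⨅ d : {d : (ℂ → E) × ℂ //
      DifferentiableOn ℂ d.1 (Metric.ball 0 1) ∧
      Set.MapsTo d.1 (Metric.ball 0 1) Ω ∧
      d.1 0 = w ∧ d.2 ∈ Metric.ball (0 : ℂ) 1 ∧ d.1 d.2 = z},
    ENNReal.ofReal (poincareDist 0 d.1.2)

/-- The Kobayashi pseudodistance of `Ω ⊆ E`: the largest pseudodistance
dominated by the Lempert function, obtained by chaining analytic discs. -/
noncomputable def kobayashi (E : Type*) [NormedAddCommGroup E] [NormedSpace ℂ E]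
    (Ω : Set E) (w z : E) : ℝ≥0∞ :=
  ⨅ c : {c : Σ m : ℕ, Fin (m + 1) → E //
      c.2 0 = w ∧ c.2 (Fin.last c.1) = z ∧ ∀ i, c.2 i ∈ Ω},
    ∑ i : Fin c.1.1, lempert E Ω (c.1.2 i.castSucc) (c.1.2 i.succ)


open Filter
open scoped NNReal

private lemma klc_exists_primitive {g : ℂ → ℂ} (hg : DifferentiableOn ℂ g (Metric.ball (0 : ℂ) 1)) :
    ∃ φ : ℂ → ℂ, ∀ w ∈ Metric.ball (0 : ℂ) 1, HasDerivAt φ (g w) w := by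
  set p := cauchyPowerSeries g 0 (1 / 2 : ℝ≥0) with hp_def
  have hball : ∀ r : ℝ≥0, 0 < r → (r : ℝ) < 1 →
      HasFPowerSeriesOnBall g (cauchyPowerSeries g 0 r) 0 r := by
    intro r hr0 hr1
    exact (hg.mono (Metric.closedBall_subset_ball (by exact_mod_cast hr1))).hasFPowerSeriesOnBall hr0
  have hpr : ∀ r : ℝ≥0, 0 < r → (r : ℝ) < 1 → HasFPowerSeriesOnBall g p 0 r := by
    intro r hr0 hr1
    have h1 := hball r hr0 hr1
    have h2 := hball (1 / 2) (by norm_num) (by norm_num)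
    have : cauchyPowerSeries g 0 r = p :=
      h1.hasFPowerSeriesAt.eq_formalMultilinearSeries h2.hasFPowerSeriesAt
    rwa [this] at h1
  set a : ℕ → ℂ := fun n => p.coeff n with ha_def
  refine ⟨fun w => ∑' n : ℕ, ((n : ℂ) + 1)⁻¹ * a n * w ^ (n + 1), ?_⟩
  intro w0 hw0
  rw [mem_ball_zero_iff] at hw0
  set r : ℝ := (‖w0‖ + 1) / 2 with hr_def
  have hw0r : ‖w0‖ < r := by rw [hr_def]; linarith
  have hr0 : 0 < r := lt_of_le_of_lt (norm_nonneg w0) hw0r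
  have hr1 : r < 1 := by rw [hr_def]; linarith
  set r' : ℝ≥0 := Real.toNNReal ((r + 1) / 2) with hr'_def
  have hr'coe : (r' : ℝ) = (r + 1) / 2 := Real.coe_toNNReal _ (by positivity)
  have hrr' : r < (r' : ℝ) := by rw [hr'coe]; linarith
  have hr'1 : (r' : ℝ) < 1 := by rw [hr'coe]; linarith
  have hp' : HasFPowerSeriesOnBall g p 0 r' :=
    hpr r' (by rw [← NNReal.coe_pos]; linarith) hr'1
  have hrad : ((Real.toNNReal r : ℝ≥0) : ℝ≥0∞) < p.radius := by
    refine lt_of_lt_of_le ?_ hp'.r_le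
    rw [ENNReal.coe_lt_coe, ← NNReal.coe_lt_coe, Real.coe_toNNReal _ hr0.le]
    exact hrr'
  have hu : Summable fun n => ‖a n‖ * r ^ n := by
    have := p.summable_norm_mul_pow hrad
    simpa [ha_def, FormalMultilinearSeries.norm_apply_eq_norm_coef,
      Real.coe_toNNReal _ hr0.le] using this
  have hsum : ∀ y : ℂ, ‖y‖ < 1 → HasSum (fun n => a n * y ^ n) (g y) := by
    intro y hy
    set ry : ℝ≥0 := Real.toNNReal ((‖y‖ + 1) / 2) with hry_def
    have hrycoe : (ry : ℝ) = (‖y‖ + 1) / 2 := Real.coe_toNNReal _ (by positivity)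
    have h1 : ‖y‖ < (ry : ℝ) := by rw [hrycoe]; linarith
    have h2 : (ry : ℝ) < 1 := by rw [hrycoe]; linarith
    have hpy := hpr ry (by rw [← NNReal.coe_pos]; exact lt_of_le_of_lt (norm_nonneg y) h1) h2
    have hmem : y ∈ Metric.eball (0 : ℂ) ry := by
      rw [Metric.emetric_ball_nnreal, mem_ball_zero_iff]; exact h1
    have := hpy.hasSum hmem
    simp only [FormalMultilinearSeries.apply_eq_pow_smul_coeff, smul_eq_mul, zero_add] at this
    rw [show (fun n => a n * y ^ n) = fun n => y ^ n * p.coeff n from funext fun n => mul_comm _ _]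
    exact this
  have key := hasDerivAt_tsum_of_isPreconnected hu Metric.isOpen_ball
    (convex_ball (0 : ℂ) r).isPreconnected
    (g := fun (n : ℕ) (w : ℂ) => ((n : ℂ) + 1)⁻¹ * a n * w ^ (n + 1))
    (g' := fun (n : ℕ) (w : ℂ) => a n * w ^ n)
    (fun n y _ => by
      have h1 : HasDerivAt (fun x : ℂ => x ^ (n + 1)) ((((n : ℕ) + 1 : ℕ) : ℂ) * y ^ n) y := by
        simpa using hasDerivAt_pow (n + 1) y
      have h2 := h1.const_mul (((n : ℂ) + 1)⁻¹ * a n)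
      have hne : ((n : ℂ) + 1) ≠ 0 := Nat.cast_add_one_ne_zero n
      refine h2.congr_deriv ?_
      push_cast
      field_simp)
    (fun n y hy => by
      rw [mem_ball_zero_iff] at hy
      calc ‖a n * y ^ n‖ = ‖a n‖ * ‖y‖ ^ n := by rw [norm_mul, norm_pow]
        _ ≤ ‖a n‖ * r ^ n := by gcongr)
    (Metric.mem_ball_self hr0)
    (by
      have : (fun n : ℕ => ((n : ℂ) + 1)⁻¹ * a n * (0 : ℂ) ^ (n + 1)) = fun _ => (0 : ℂ) := by
        funext n; simp
      rw [this]; exact summable_zero)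
    (mem_ball_zero_iff.mpr hw0r)
  have hsum' := (hsum w0 hw0).tsum_eq
  rwa [hsum'] at key

private lemma klc_exists_log {h : ℂ → ℂ}
    (hd : DifferentiableOn ℂ h (Metric.ball (0 : ℂ) 1))
    (hne : ∀ w ∈ Metric.ball (0 : ℂ) 1, h w ≠ 0) :
    ∃ φ : ℂ → ℂ, DifferentiableOn ℂ φ (Metric.ball (0 : ℂ) 1) ∧
      ∀ w ∈ Metric.ball (0 : ℂ) 1, Complex.exp (φ w) = h w := by
  have hgd : DifferentiableOn ℂ (fun w => deriv h w / h w) (Metric.ball (0 : ℂ) 1) := by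
    refine DifferentiableOn.div ?_ hd hne
    exact ((hd.analyticOnNhd Metric.isOpen_ball).deriv).differentiableOn
  obtain ⟨ψ, hψ⟩ := klc_exists_primitive hgd
  set F : ℂ → ℂ := fun w => h w * Complex.exp (-ψ w) with hF_def
  have hF : ∀ w ∈ Metric.ball (0 : ℂ) 1, HasDerivAt F 0 w := by
    intro w hw
    have h1 : HasDerivAt h (deriv h w) w :=
      (hd.differentiableAt (Metric.isOpen_ball.mem_nhds hw)).hasDerivAt
    have h2 : HasDerivAt (fun w => Complex.exp (-ψ w))
        (Complex.exp (-ψ w) * -(deriv h w / h w)) w := ((hψ w hw).neg).cexp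
    have h3 := h1.mul h2
    refine HasDerivAt.congr_deriv (f := F) h3 ?_
    field_simp [hne w hw]
    ring
  have hconst : ∀ w ∈ Metric.ball (0 : ℂ) 1, F w = F 0 := by
    intro w hw
    refine Convex.is_const_of_fderivWithin_eq_zero (𝕜 := ℂ)
      (convex_ball (0 : ℂ) 1) (fun x hx => ((hF x hx).differentiableAt).differentiableWithinAt)
      (fun x hx => ?_) hw (Metric.mem_ball_self one_pos)
    rw [fderivWithin_eq_fderiv (Metric.isOpen_ball.uniqueDiffWithinAt hx)
      ((hF x hx).differentiableAt)]
    have := (hF x hx).deriv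
    rw [← toSpanSingleton_deriv, this]
    ext
    simp
  refine ⟨fun w => ψ w - ψ 0 + Complex.log (h 0), ?_, ?_⟩
  · intro w hw
    exact (((hψ w hw).differentiableAt.differentiableWithinAt.sub_const (ψ 0)).add_const _)
  · intro w hw
    have h0mem : (0 : ℂ) ∈ Metric.ball (0 : ℂ) 1 := Metric.mem_ball_self one_pos
    have hFw := hconst w hw
    simp only [hF_def] at hFw
    have hexp0 : Complex.exp (Complex.log (h 0)) = h 0 := Complex.exp_log (hne 0 h0mem)
    rw [Complex.exp_add, Complex.exp_sub, hexp0]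
    simp only [Complex.exp_neg] at hFw
    have hFw' : h w * Complex.exp (ψ 0) = h 0 * Complex.exp (ψ w) := by
      field_simp at hFw
      linear_combination hFw
    rw [div_mul_eq_mul_div, div_eq_iff (Complex.exp_ne_zero _)]
    linear_combination -hFw'

private lemma klc_harnack {h : ℂ → ℂ}
    (hd : DifferentiableOn ℂ h (Metric.ball (0 : ℂ) 1))
    (hmem : ∀ w ∈ Metric.ball (0 : ℂ) 1, ‖h w‖ < 1 ∧ h w ≠ 0)
    {σ : ℂ} (hσ : σ ∈ Metric.ball (0 : ℂ) 1) :
    |Real.log (-Real.log (‖h σ‖)) - Real.log (-Real.log (‖h 0‖))|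
      ≤ Real.log ((1 + ‖σ‖) / (1 - ‖σ‖)) := by
  have h0mem : (0 : ℂ) ∈ Metric.ball (0 : ℂ) 1 := Metric.mem_ball_self one_pos
  obtain ⟨φ, hφd, hφ⟩ := klc_exists_log hd (fun w hw => (hmem w hw).2)
  have hre : ∀ w ∈ Metric.ball (0 : ℂ) 1, (φ w).re = Real.log (‖h w‖) := by
    intro w hw
    rw [← hφ w hw, Complex.norm_exp, Real.log_exp]
  have hneg : ∀ w ∈ Metric.ball (0 : ℂ) 1, (φ w).re < 0 := by
    intro w hw
    rw [hre w hw]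
    exact Real.log_neg (norm_pos_iff.mpr (hmem w hw).2) (hmem w hw).1
  set A : ℂ := φ 0 with hA_def
  have hden_ne : ∀ w ∈ Metric.ball (0 : ℂ) 1, φ w + (starRingEnd ℂ) A ≠ 0 := by
    intro w hw hzero
    have : (φ w + (starRingEnd ℂ) A).re = (φ w).re + A.re := by
      simp [Complex.add_re, Complex.conj_re]
    rw [hzero] at this
    simp at this
    have := hneg w hw
    have := hneg 0 h0mem
    rw [← hA_def] at *
    linarith [hneg w hw, hneg 0 h0mem]
  set G : ℂ → ℂ := fun w => (φ w - A) / (φ w + (starRingEnd ℂ) A) with hG_def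
  have hsq : ∀ w, (‖φ w - A‖)^2 + 4 * ((φ w).re * A.re)
      = (‖φ w + (starRingEnd ℂ) A‖)^2 := by
    intro w
    rw [Complex.sq_norm, Complex.sq_norm, Complex.normSq_apply, Complex.normSq_apply]
    simp only [Complex.sub_re, Complex.sub_im, Complex.add_re, Complex.add_im,
      Complex.conj_re, Complex.conj_im]
    ring
  have hGmaps : Set.MapsTo G (Metric.ball (0 : ℂ) 1) (Metric.ball (0 : ℂ) 1) := by
    intro w hw
    rw [Metric.mem_ball, dist_zero_right, hG_def]
    have hpos : 0 < 4 * ((φ w).re * A.re) :=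
      mul_pos (by norm_num) (mul_pos_of_neg_of_neg (hneg w hw) (hneg 0 h0mem))
    have hlt : (‖φ w - A‖)^2 < (‖φ w + (starRingEnd ℂ) A‖)^2 := by
      rw [← hsq w]; linarith
    have := lt_of_pow_lt_pow_left₀ 2 (norm_nonneg _) hlt
    rw [norm_div]
    rw [div_lt_one (lt_of_le_of_lt (norm_nonneg _) this)]
    exact this
  have hGd : DifferentiableOn ℂ G (Metric.ball (0 : ℂ) 1) :=
    ((hφd.sub_const A).div (hφd.add_const ((starRingEnd ℂ) A)) (hden_ne))
  have hG0 : G 0 = 0 := by simp [hG_def, hA_def]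
  have hσ1 : ‖σ‖ < 1 := by rwa [Metric.mem_ball, dist_zero_right] at hσ
  have hSchwarz := Complex.norm_le_norm_of_mapsTo_ball hGd (hGmaps.mono_right Metric.ball_subset_closedBall) hG0 hσ1
  -- translate to real inequality
  set x : ℝ := (φ σ).re with hx_def
  set y : ℝ := A.re with hy_def
  set s : ℝ := ‖σ‖ with hs_def
  have hxneg : x < 0 := hneg σ hσ
  have hyneg : y < 0 := hneg 0 h0mem
  have hs0 : 0 ≤ s := norm_nonneg σ
  have habs : ‖φ σ - A‖ ≤ s * ‖φ σ + (starRingEnd ℂ) A‖ := by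
    have hGσ : ‖G σ‖ = ‖φ σ - A‖ / ‖φ σ + (starRingEnd ℂ) A‖ := by
      rw [hG_def]; exact norm_div _ _
    rw [hGσ] at hSchwarz
    rw [div_le_iff₀ (norm_pos_iff.mpr (hden_ne σ hσ))] at hSchwarz
    linarith [hSchwarz]
  -- squares
  have hsq1 : (x - y)^2 ≤ s^2 * (x + y)^2 := by
    have h1 := hsq σ
    have h2 : (‖φ σ - A‖)^2 ≤ s^2 * (‖φ σ + (starRingEnd ℂ) A‖)^2 := by
      calc (‖φ σ - A‖)^2 ≤ (s * ‖φ σ + (starRingEnd ℂ) A‖)^2 := by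
            apply pow_le_pow_left₀ (norm_nonneg _) habs
        _ = s^2 * (‖φ σ + (starRingEnd ℂ) A‖)^2 := by ring
    -- expand squares of abs via re/im
    have e1 : (‖φ σ - A‖)^2 = (x - y)^2 + ((φ σ).im - A.im)^2 := by
      rw [Complex.sq_norm, Complex.normSq_apply]
      simp only [Complex.sub_re, Complex.sub_im, hx_def, hy_def]
      ring
    have e2 : (‖φ σ + (starRingEnd ℂ) A‖)^2 = (x + y)^2 + ((φ σ).im - A.im)^2 := by
      rw [Complex.sq_norm, Complex.normSq_apply]
      simp only [Complex.add_re, Complex.add_im, Complex.conj_re, Complex.conj_im, hx_def, hy_def]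
      ring
    rw [e1, e2] at h2
    nlinarith [sq_nonneg ((φ σ).im - A.im), mul_nonneg (mul_nonneg (by linarith : (0:ℝ) ≤ 1 - s) (by linarith : (0:ℝ) ≤ 1 + s)) (sq_nonneg ((φ σ).im - A.im))]
  have hkey : |x - y| ≤ s * (-(x + y)) := by
    have hxy : 0 ≤ -(x + y) := by linarith
    have : |x - y|^2 ≤ (s * (-(x + y)))^2 := by
      calc |x - y|^2 = (x - y)^2 := sq_abs _
        _ ≤ s^2 * (x + y)^2 := hsq1
        _ = (s * (-(x + y)))^2 := by ring
    have h2 : |x - y| ^ 2 ≤ (s * (-(x + y))) ^ 2 := this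
    exact le_of_pow_le_pow_left₀ (by norm_num) (mul_nonneg hs0 hxy) h2
  have habs2 := abs_le.mp hkey
  have hs1 : s < 1 := hσ1
  have hx' : (0:ℝ) < -x := by linarith
  have hy' : (0:ℝ) < -y := by linarith
  have h1s : (0:ℝ) < 1 - s := by linarith
  have hT : (0:ℝ) < (1 + s) / (1 - s) := div_pos (by linarith) h1s
  have hA1 : -y ≤ (-x) * ((1 + s) / (1 - s)) := by
    rw [← mul_div_assoc, le_div_iff₀ h1s]
    nlinarith [habs2.1, habs2.2]
  have hA2 : -x ≤ (-y) * ((1 + s) / (1 - s)) := by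
    rw [← mul_div_assoc, le_div_iff₀ h1s]
    nlinarith [habs2.1, habs2.2]
  have hlog1 : Real.log (-y) ≤ Real.log (-x) + Real.log ((1 + s) / (1 - s)) := by
    calc Real.log (-y) ≤ Real.log ((-x) * ((1 + s) / (1 - s))) :=
          Real.log_le_log hy' hA1
      _ = Real.log (-x) + Real.log ((1 + s) / (1 - s)) :=
          Real.log_mul (ne_of_gt hx') (ne_of_gt hT)
  have hlog2 : Real.log (-x) ≤ Real.log (-y) + Real.log ((1 + s) / (1 - s)) := by
    calc Real.log (-x) ≤ Real.log ((-y) * ((1 + s) / (1 - s))) :=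
          Real.log_le_log hx' hA2
      _ = Real.log (-y) + Real.log ((1 + s) / (1 - s)) :=
          Real.log_mul (ne_of_gt hy') (ne_of_gt hT)
  rw [← hre σ hσ, ← hre 0 h0mem, ← hA_def, ← hx_def, ← hy_def]
  rw [abs_le]
  constructor <;> linarith

/-- The comparison function used for the lower bound on the Kobayashi distance. -/
noncomputable def klcG {n : ℕ} (a : Fin n → ℂ) (b : ℂ) (R : ℝ) (u : Fin n → ℂ) : ℝ :=
  Real.log (-Real.log (‖(∑ i, a i * u i) - b‖ / R))

private lemma klc_poincare_zero (σ : ℂ) :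
    poincareDist 0 σ = (1 / 2) * Real.log ((1 + ‖σ‖) / (1 - ‖σ‖)) := by
  simp [poincareDist]

private lemma klc_lempert_lower {n : ℕ} (Ω : Set (Fin n → ℂ)) (a : Fin n → ℂ) (b : ℂ) (R : ℝ)
    (hval : ∀ v ∈ Ω, (∑ i, a i * v i) ≠ b ∧ ‖(∑ i, a i * v i) - b‖ < R)
    {u v : Fin n → ℂ} (hu : u ∈ Ω) :
    ENNReal.ofReal (|klcG a b R v - klcG a b R u| / 2) ≤ lempert (Fin n → ℂ) Ω u v := by
  refine le_iInf ?_
  rintro ⟨⟨f, σ⟩, hfd, hmaps, hf0, hσ, hfσ⟩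
  simp only at hfd hmaps hf0 hσ hfσ ⊢
  rw [klc_poincare_zero]
  apply ENNReal.ofReal_le_ofReal
  have hR : 0 < R := lt_of_le_of_lt (norm_nonneg _) (hval u hu).2
  set h : ℂ → ℂ := fun w => ((∑ i, a i * f w i) - b) / (R : ℂ) with hh_def
  have hdi : ∀ i, DifferentiableOn ℂ (fun w => f w i) (Metric.ball (0 : ℂ) 1) :=
    differentiableOn_pi.mp hfd
  have hhd : DifferentiableOn ℂ h (Metric.ball (0 : ℂ) 1) := by
    apply DifferentiableOn.div_const
    apply DifferentiableOn.sub_const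
    exact DifferentiableOn.fun_sum fun i _ => (hdi i).const_mul (a i)
  have habs : ∀ w, ‖h w‖ = ‖(∑ i, a i * f w i) - b‖ / R := by
    intro w
    rw [hh_def]
    simp only [norm_div, Complex.norm_real, Real.norm_eq_abs, abs_of_pos hR]
  have hmem : ∀ w ∈ Metric.ball (0 : ℂ) 1, ‖h w‖ < 1 ∧ h w ≠ 0 := by
    intro w hw
    have hfw := hval (f w) (hmaps hw)
    constructor
    · rw [habs w, div_lt_one hR]; exact hfw.2
    · exact div_ne_zero (sub_ne_zero.mpr hfw.1) (Complex.ofReal_ne_zero.mpr hR.ne')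
  have hH := klc_harnack hhd hmem hσ
  have e1 : ‖h σ‖ = ‖(∑ i, a i * v i) - b‖ / R := by rw [habs, hfσ]
  have e2 : ‖h 0‖ = ‖(∑ i, a i * u i) - b‖ / R := by rw [habs, hf0]
  rw [e1, e2] at hH
  unfold klcG
  linarith [hH]

private lemma klc_tele : ∀ (m : ℕ) (G : Fin (m + 1) → ℝ),
    |G (Fin.last m) - G 0| ≤ ∑ i : Fin m, |G i.succ - G i.castSucc| := by
  intro m
  induction m with
  | zero => intro G; simp
  | succ m ih =>
    intro G
    rw [Fin.sum_univ_castSucc]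
    have h1 := ih fun j => G j.castSucc
    simp only [← Fin.succ_castSucc, Fin.castSucc_zero] at h1
    simp only [Fin.succ_last]
    have habs := abs_sub_le (G (Fin.last (m + 1))) (G ((Fin.last m).castSucc)) (G 0)
    have hcomm := abs_sub_comm (G (Fin.last (m + 1))) (G ((Fin.last m).castSucc))
    linarith

private lemma klc_kobayashi_lower {n : ℕ} (Ω : Set (Fin n → ℂ)) (a : Fin n → ℂ) (b : ℂ) (R : ℝ)
    (hval : ∀ v ∈ Ω, (∑ i, a i * v i) ≠ b ∧ ‖(∑ i, a i * v i) - b‖ < R)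
    {u v : Fin n → ℂ} (hu : u ∈ Ω) (hv : v ∈ Ω) :
    ENNReal.ofReal (|klcG a b R v - klcG a b R u| / 2) ≤ kobayashi (Fin n → ℂ) Ω u v := by
  refine le_iInf ?_
  rintro ⟨⟨m, c⟩, hc0, hclast, hcmem⟩
  have htel : |klcG a b R v - klcG a b R u| / 2
      ≤ ∑ i : Fin m, |klcG a b R (c i.succ) - klcG a b R (c i.castSucc)| / 2 := by
    rw [← Finset.sum_div]
    have hc0' : c 0 = u := hc0
    have hclast' : c (Fin.last m) = v := hclast
    have := klc_tele m fun j => klcG a b R (c j)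
    rw [hc0', hclast'] at this
    linarith
  calc ENNReal.ofReal (|klcG a b R v - klcG a b R u| / 2)
      ≤ ENNReal.ofReal (∑ i : Fin m,
          |klcG a b R (c i.succ) - klcG a b R (c i.castSucc)| / 2) :=
        ENNReal.ofReal_le_ofReal htel
    _ = ∑ i : Fin m, ENNReal.ofReal
          (|klcG a b R (c i.succ) - klcG a b R (c i.castSucc)| / 2) :=
        ENNReal.ofReal_sum_of_nonneg fun i _ => by positivity
    _ ≤ ∑ i : Fin m, lempert (Fin n → ℂ) Ω (c i.castSucc) (c i.succ) :=
        Finset.sum_le_sum fun i _ => klc_lempert_lower Ω a b R hval (hcmem i.castSucc)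

/-- Every bounded linearly convex domain `Ω ⊆ ℂ^n` is Kobayashi complete
(`k`-finitely compact): `k_Ω(z, z^k) → ∞` for every sequence in `Ω` without
accumulation point in `Ω`. -/
theorem bounded_linearly_convex_kobayashi_complete (n : ℕ)
    (Ω : Set (Fin n → ℂ)) (hopen : IsOpen Ω) (hconn : IsConnected Ω)
    (hbdd : Bornology.IsBounded Ω)
    (hlc : ∀ w : Fin n → ℂ, w ∉ Ω →
      ∃ a : Fin n → ℂ, a ≠ 0 ∧ ∃ b : ℂ,
        (∑ i, a i * w i) = b ∧ ∀ v ∈ Ω, (∑ i, a i * v i) ≠ b) :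
    ∀ z ∈ Ω, ∀ zk : ℕ → (Fin n → ℂ), (∀ k, zk k ∈ Ω) →
      (¬ ∃ x ∈ Ω, MapClusterPt x Filter.atTop zk) →
      Filter.Tendsto (fun k => kobayashi (Fin n → ℂ) Ω z (zk k))
        Filter.atTop (nhds ⊤) := by
  intro z hz zk hzk hcl
  rw [ENNReal.tendsto_nhds_top_iff_nnreal]
  by_contra hcon
  push_neg at hcon
  obtain ⟨M, hM⟩ := hcon
  have hM' : ∃ᶠ k in Filter.atTop, kobayashi (Fin n → ℂ) Ω z (zk k) ≤ (M : ℝ≥0∞) :=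
    hM
  obtain ⟨φ, hφmono, hφ⟩ := Filter.extraction_of_frequently_atTop hM'
  have hcomp : IsCompact (closure Ω) := hbdd.isCompact_closure
  obtain ⟨p, hpcl, ψ, hψmono, hψtend⟩ :=
    hcomp.tendsto_subseq (fun j : ℕ => subset_closure (hzk (φ j)))
  have hpΩ : p ∉ Ω := by
    intro hpin
    exact hcl ⟨p, hpin, MapClusterPt.of_comp ((hφmono.comp hψmono).tendsto_atTop) hψtend.mapClusterPt⟩
  obtain ⟨a, ha0, b, hab, hbsep⟩ := hlc p hpΩ
  obtain ⟨C, hC⟩ := isBounded_iff_forall_norm_le.mp hbdd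
  set R : ℝ := (∑ i, ‖a i‖) * C + ‖b‖ + 1 with hR_def
  have hRb : ∀ v ∈ Ω, ‖(∑ i, a i * v i) - b‖ < R := by
    intro v hv
    have h2 : ‖∑ i, a i * v i‖ ≤ ∑ i, ‖a i‖ * C := by
      refine le_trans (norm_sum_le _ _) (Finset.sum_le_sum fun i _ => ?_)
      rw [norm_mul]
      refine mul_le_mul_of_nonneg_left ?_ (norm_nonneg _)
      calc ‖v i‖ = ‖v i‖ := rfl
        _ ≤ ‖v‖ := norm_le_pi_norm v i
        _ ≤ C := hC v hv
    have h3 : ‖(∑ i, a i * v i) - b‖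
        ≤ ‖∑ i, a i * v i‖ + ‖b‖ := by
      exact norm_sub_le _ _
    have h4 : (∑ i, ‖a i‖ * C) = (∑ i, ‖a i‖) * C :=
      (Finset.sum_mul _ _ _).symm
    rw [hR_def]
    linarith
  have hval : ∀ v ∈ Ω, (∑ i, a i * v i) ≠ b ∧ ‖(∑ i, a i * v i) - b‖ < R :=
    fun v hv => ⟨hbsep v hv, hRb v hv⟩
  have hRpos : 0 < R := lt_of_le_of_lt (norm_nonneg _) (hRb z hz)
  have hreal : ∀ j, |klcG a b R (zk (φ (ψ j))) - klcG a b R z| / 2 ≤ (M : ℝ) := by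
    intro j
    have hlow := le_trans
      (klc_kobayashi_lower Ω a b R hval hz (hzk (φ (ψ j)))) (hφ (ψ j))
    rw [← ENNReal.ofReal_coe_nnreal] at hlow
    exact (ENNReal.ofReal_le_ofReal_iff M.coe_nonneg).mp hlow
  -- the linear images converge to b
  have hLcont : Continuous (fun v : Fin n → ℂ => ∑ i, a i * v i) :=
    continuous_finset_sum _ fun i _ => continuous_const.mul (continuous_apply i)
  have h1 : Filter.Tendsto (fun j => ∑ i, a i * zk (φ (ψ j)) i)
      Filter.atTop (nhds (∑ i, a i * p i)) := (hLcont.tendsto p).comp hψtend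
  rw [hab] at h1
  have h2 : Filter.Tendsto (fun j => ‖(∑ i, a i * zk (φ (ψ j)) i) - b‖)
      Filter.atTop (nhds 0) := by
    have h3 := h1.sub_const b
    rw [sub_self] at h3
    have h4 := (continuous_norm.tendsto 0).comp h3
    rwa [norm_zero] at h4
  set T : ℝ := 2 * (M : ℝ) + klcG a b R z + 1 with hT_def
  set ε : ℝ := R * Real.exp (-Real.exp T) with hε_def
  have hεpos : 0 < ε := mul_pos hRpos (Real.exp_pos _)
  obtain ⟨j, hj⟩ := (h2.eventually_lt_const hεpos).exists
  set w := zk (φ (ψ j)) with hw_def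
  have hwΩ : w ∈ Ω := hzk _
  have h0 : 0 < ‖(∑ i, a i * w i) - b‖ :=
    norm_pos_iff.mpr (sub_ne_zero.mpr (hval w hwΩ).1)
  set q : ℝ := ‖(∑ i, a i * w i) - b‖ / R with hq_def
  have hq0 : 0 < q := div_pos h0 hRpos
  have hq1 : q < Real.exp (-Real.exp T) := by
    rw [hq_def, div_lt_iff₀ hRpos, mul_comm]
    exact hj
  have hlogq : Real.log q < -Real.exp T := (Real.log_lt_iff_lt_exp hq0).mpr hq1
  have hnl : Real.exp T < -Real.log q := by linarith
  have hgw : T < klcG a b R w := by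
    have hx : (0 : ℝ) < -Real.log q := lt_trans (Real.exp_pos T) hnl
    have := (Real.lt_log_iff_exp_lt hx).mpr hnl
    simpa [klcG, hq_def] using this
  have := hreal j
  have habs := le_abs_self (klcG a b R w - klcG a b R z)
  rw [← hw_def] at this
  rw [hT_def] at hgw
  linarith
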